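/- Suppose the productions of a nonterminal C of the form C → αX are each split into two productions C → A_C X and A_C → α where A_C is a fresh nonterminal. Then the transformed grammar generates the same language: for all w ∈ T*, S ⇒*_G w iff S ⇒*_{G'} w. -/

import Mathlib

open scoped Classical

/-- Embed symbols over nonterminals `N` into symbols over `N ⊕ Unit`. -/
def embSymbol {T N : Type} : Symbol T N → Symbol T (N ⊕ Unit)
  | .terminal t => .terminal t
  | .nonterminal n => .nonterminal (Sum.inl n)

/-- Embed a rule over nonterminals `N` into a rule over `N ⊕ Unit`. -/
def embRule {T N : Type} (r : ContextFreeRule T N) : ContextFreeRule T (N ⊕ Unit) :=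
  ⟨Sum.inl r.input, r.output.map embSymbol⟩

/-- The grammar obtained from `g` by splitting the production `C → αX` into the two
productions `C → A X` and `A → α`, where `A = Sum.inr ()` is a fresh nonterminal. -/
noncomputable def splitGrammar {T : Type} (g : ContextFreeGrammar T)
    (C : g.NT) (α : List (Symbol T g.NT)) (X : Symbol T g.NT) :
    ContextFreeGrammar T where
  NT := g.NT ⊕ Unit
  initial := Sum.inl g.initial
  rules :=
    (g.rules.erase ⟨C, α ++ [X]⟩).image embRule ∪
      { ⟨Sum.inl C, [Symbol.nonterminal (Sum.inr ()), embSymbol X]⟩,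
        ⟨Sum.inr (), α.map embSymbol⟩ }

section Aux

variable {T : Type} {g : ContextFreeGrammar T} {C : g.NT} {α : List (Symbol T g.NT)}
  {X : Symbol T g.NT}

/-- Projection of symbols over `N ⊕ Unit` back to strings over `N`, sending the fresh
nonterminal to `α`. -/
def projSymbol (α : List (Symbol T g.NT)) : Symbol T (g.NT ⊕ Unit) → List (Symbol T g.NT)
  | .terminal t => [.terminal t]
  | .nonterminal (Sum.inl n) => [.nonterminal n]
  | .nonterminal (Sum.inr _) => α

lemma proj_emb (l : List (Symbol T g.NT)) :
    (l.map embSymbol).flatMap (projSymbol α) = l := by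
  induction l with
  | nil => rfl
  | cons s l ih =>
    cases s <;> simp [embSymbol, projSymbol, ih]

lemma ruleCA_mem :
    (⟨Sum.inl C, [Symbol.nonterminal (Sum.inr ()), embSymbol X]⟩ :
      ContextFreeRule T (g.NT ⊕ Unit)) ∈ (splitGrammar g C α X).rules := by
  exact Finset.mem_union_right _ (Finset.mem_insert_self _ _)

lemma ruleA_mem :
    (⟨Sum.inr (), α.map embSymbol⟩ :
      ContextFreeRule T (g.NT ⊕ Unit)) ∈ (splitGrammar g C α X).rules := by
  exact Finset.mem_union_right _ (Finset.mem_insert_of_mem (Finset.mem_singleton_self _))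

lemma forward_step {u v : List (Symbol T g.NT)} (h : g.Produces u v) :
    (splitGrammar g C α X).Derives (u.map embSymbol) (v.map embSymbol) := by
  change (splitGrammar g C α X).Derives (List.map (β := Symbol T (g.NT ⊕ Unit)) embSymbol u)
    (List.map (β := Symbol T (g.NT ⊕ Unit)) embSymbol v)
  obtain ⟨r, hr, hru⟩ := h
  obtain ⟨p, q, rfl, rfl⟩ := hru.exists_parts
  by_cases hrC : r = ⟨C, α ++ [X]⟩
  · subst hrC
    apply ContextFreeGrammar.Produces.trans_derives
      (v := p.map embSymbol ++ [Symbol.nonterminal (Sum.inr ()), embSymbol X] ++ q.map embSymbol)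
    · refine ⟨_, ruleCA_mem, ?_⟩
      have := (ContextFreeRule.rewrites_of_exists_parts
        (⟨Sum.inl C, [Symbol.nonterminal (Sum.inr ()), embSymbol X]⟩ :
          ContextFreeRule T (g.NT ⊕ Unit)) (p.map embSymbol) (q.map embSymbol))
      simp [embSymbol] at this ⊢
      exact this
    · apply ContextFreeGrammar.Produces.single
      refine ⟨_, ruleA_mem, ?_⟩
      have := (ContextFreeRule.rewrites_of_exists_parts
        (⟨Sum.inr (), α.map embSymbol⟩ : ContextFreeRule T (g.NT ⊕ Unit))
        (p.map embSymbol) (embSymbol X :: q.map embSymbol))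
      simp [embSymbol] at this ⊢
      exact this
  · apply ContextFreeGrammar.Produces.single
    refine ⟨embRule r, ?_, ?_⟩
    · simp only [splitGrammar, Finset.mem_union, Finset.mem_image]
      exact Finset.mem_union_left _ (Finset.mem_image.2 ⟨r, Finset.mem_erase.2 ⟨hrC, hr⟩, rfl⟩)
    · have := (ContextFreeRule.rewrites_of_exists_parts (embRule r)
        (p.map embSymbol) (q.map embSymbol))
      simp [embRule, embSymbol] at this ⊢
      exact this

lemma backward_step {u v : List (Symbol T (g.NT ⊕ Unit))}
    (hmem : (⟨C, α ++ [X]⟩ : ContextFreeRule T g.NT) ∈ g.rules)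
    (h : (splitGrammar g C α X).Produces u v) :
    g.Derives (u.flatMap (projSymbol α)) (v.flatMap (projSymbol α)) := by
  change ∃ r ∈ ((g.rules.erase ⟨C, α ++ [X]⟩).image embRule ∪
      { ⟨Sum.inl C, [Symbol.nonterminal (Sum.inr ()), embSymbol X]⟩,
        ⟨Sum.inr (), α.map embSymbol⟩ } : Finset (ContextFreeRule T (g.NT ⊕ Unit))),
    r.Rewrites u v at h
  obtain ⟨r', hr', hru⟩ := h
  obtain ⟨p, q, rfl, rfl⟩ := hru.exists_parts
  simp only [splitGrammar, Finset.mem_union, Finset.mem_image, Finset.mem_insert,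
    Finset.mem_singleton] at hr'
  rcases hr' with ⟨r, hr, rfl⟩ | rfl | rfl
  · apply ContextFreeGrammar.Produces.single
    refine ⟨r, (Finset.mem_erase.1 hr).2, ?_⟩
    have := ContextFreeRule.rewrites_of_exists_parts r
      (p.flatMap (projSymbol α)) (q.flatMap (projSymbol α))
    simpa [embRule, List.flatMap_append, projSymbol, proj_emb] using this
  · apply ContextFreeGrammar.Produces.single
    refine ⟨⟨C, α ++ [X]⟩, hmem, ?_⟩
    have := ContextFreeRule.rewrites_of_exists_parts
      (⟨C, α ++ [X]⟩ : ContextFreeRule T g.NT)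
      (p.flatMap (projSymbol α)) (q.flatMap (projSymbol α))
    have hX : (projSymbol α (embSymbol X)) = [X] := by cases X <;> rfl
    have hA : (projSymbol α (Symbol.nonterminal (Sum.inr ()) : Symbol T (g.NT ⊕ Unit))) = α := rfl
    have hC : (projSymbol α (Symbol.nonterminal (Sum.inl C) : Symbol T (g.NT ⊕ Unit))) =
      [Symbol.nonterminal C] := rfl
    simpa only [List.flatMap_append, List.flatMap_cons, List.flatMap_nil, hA, hX,
      List.append_nil, List.append_assoc, List.singleton_append, List.cons_append,
      List.nil_append, hC] using this
  · have h1 : ((α.map embSymbol).flatMap (projSymbol α)) = α := proj_emb α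
    simp only [List.flatMap_append, List.flatMap_cons, List.flatMap_nil, projSymbol, h1,
      List.append_nil]
    exact ContextFreeGrammar.Derives.refl _

lemma proj_terminal (w : List T) :
    ((List.map Symbol.terminal w : List (Symbol T (g.NT ⊕ Unit))).flatMap
      (projSymbol α)) = List.map Symbol.terminal w := by
  induction w with
  | nil => rfl
  | cons a w ih => simp [projSymbol, ih]

lemma backward_derives {u v : List (Symbol T (g.NT ⊕ Unit))}
    (hmem : (⟨C, α ++ [X]⟩ : ContextFreeRule T g.NT) ∈ g.rules)
    (h : (splitGrammar g C α X).Derives u v) :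
    g.Derives (u.flatMap (projSymbol α)) (v.flatMap (projSymbol α)) := by
  induction h with
  | refl => rfl
  | tail _ last ih => exact ih.trans (backward_step hmem last)

lemma forward_derives {u v : List (Symbol T g.NT)} (h : g.Derives u v) :
    (splitGrammar g C α X).Derives (u.map embSymbol) (v.map embSymbol) := by
  induction h with
  | refl => rfl
  | tail _ last ih => exact ih.trans (forward_step last)

end Aux

/-- Splitting a production `C → αX` into `C → A X`, `A → α` (with `A` fresh) preserves
the generated language. -/
theorem splitGrammar_language {T : Type} (g : ContextFreeGrammar T)
    (C : g.NT) (α : List (Symbol T g.NT)) (X : Symbol T g.NT)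
    (hmem : (⟨C, α ++ [X]⟩ : ContextFreeRule T g.NT) ∈ g.rules) :
    g.language = (splitGrammar g C α X).language := by
  ext w
  simp only [ContextFreeGrammar.mem_language_iff]
  constructor
  · intro h
    have := forward_derives (C := C) (α := α) (X := X) h
    have e : (List.map embSymbol (List.map Symbol.terminal w) :
        List (Symbol T (g.NT ⊕ Unit))) = List.map Symbol.terminal w := by
      simp [List.map_map, Function.comp_def, embSymbol]
    exact e ▸ this
  · intro h
    have := backward_derives hmem h
    have h1 := proj_terminal (g := g) (α := α) w
    simpa [projSymbol, h1, splitGrammar] using this
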